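/- Let P be a Poisson algebra over ℝ with identity. Suppose that the derived ideal D = span{ {f,g} : f,g ∈ P } has codimension 1 as a linear subspace of P, and that for every f ∈ P, f² ∈ D implies f = 0. Then every finite-codimensional Lie ideal of P contains D; in particular, every finite-codimensional Lie ideal of P has codimension at most 1. -/

import Mathlib

open Polynomial Module LinearMap

namespace Stmt5Aux

variable {P : Type*} [CommRing P] [Algebra ℝ P]

/-- The subspace `Λ(L) = {f | {f, P} ⊆ L}`. -/
def lam (br : P →ₗ[ℝ] P →ₗ[ℝ] P) (L : Submodule ℝ P) : Submodule ℝ P where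
  carrier := {f | ∀ g, br f g ∈ L}
  add_mem' := by
    intro a b ha hb g
    have : br (a + b) g = br a g + br b g := by simp [map_add]
    rw [this]; exact L.add_mem (ha g) (hb g)
  zero_mem' := by
    intro g
    have : br 0 g = 0 := by simp
    rw [this]; exact L.zero_mem
  smul_mem' := by
    intro c x hx g
    have : br (c • x) g = c • br x g := by simp
    rw [this]; exact L.smul_mem c (hx g)

lemma mem_lam {br : P →ₗ[ℝ] P →ₗ[ℝ] P} {L : Submodule ℝ P} {f : P} :
    f ∈ lam br L ↔ ∀ g, br f g ∈ L := Iff.rfl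

/-- The subspace `{x | x · P ⊆ M}`. -/
def condSub (M : Submodule ℝ P) : Submodule ℝ P where
  carrier := {x | ∀ h, x * h ∈ M}
  add_mem' := by intro a b ha hb h; rw [add_mul]; exact M.add_mem (ha h) (hb h)
  zero_mem' := by intro h; rw [zero_mul]; exact M.zero_mem
  smul_mem' := by intro c x hx h; rw [smul_mul_assoc]; exact M.smul_mem c (hx h)

lemma mem_condSub {M : Submodule ℝ P} {x : P} :
    x ∈ condSub M ↔ ∀ h, x * h ∈ M := Iff.rfl

section BasicBracket

variable (br : P →ₗ[ℝ] P →ₗ[ℝ] P)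

lemma br_one_right (leibniz : ∀ f g h : P, br f (g * h) = br f g * h + g * br f h)
    (g : P) : br g 1 = 0 := by
  have h := leibniz g 1 1
  rw [mul_one, mul_one, one_mul] at h
  have h2 : br g 1 + br g 1 = br g 1 + 0 := by rw [add_zero]; exact h.symm
  exact add_left_cancel h2

lemma br_aeval_right (leibniz : ∀ f g h : P, br f (g * h) = br f g * h + g * br f h)
    (g f : P) (p : ℝ[X]) :
    br g (aeval f p) = aeval f (derivative p) * br g f := by
  induction p using Polynomial.induction_on with
  | C a =>
      rw [aeval_C, Algebra.algebraMap_eq_smul_one, map_smul,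
        br_one_right br leibniz g, smul_zero, derivative_C, map_zero, zero_mul]
  | add p q hp hq =>
      rw [map_add, map_add, hp, hq, derivative_add, map_add, add_mul]
  | monomial n a ih =>
      have e1 : (C a * X ^ (n + 1) : ℝ[X]) = C a * X ^ n * X := by ring
      have e2 : derivative (C a * X ^ n * X : ℝ[X]) = derivative (C a * X ^ n) * X + C a * X ^ n := by
        conv_lhs => rw [derivative_mul]
        rw [derivative_X, mul_one]
      rw [e1, map_mul (aeval f) (C a * X ^ n) X, aeval_X, leibniz g _ f, ih, e2,
        map_add (aeval f) (derivative (C a * X ^ n) * X) (C a * X ^ n),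
        map_mul (aeval f) (derivative (C a * X ^ n)) X, aeval_X]
      ring

lemma br_aeval_left (anti : ∀ f g : P, br f g = - br g f)
    (leibniz : ∀ f g h : P, br f (g * h) = br f g * h + g * br f h)
    (f g : P) (p : ℝ[X]) :
    br (aeval f p) g = aeval f (derivative p) * br f g := by
  rw [anti (aeval f p) g, br_aeval_right br leibniz g f p, anti g f]
  ring

lemma br_mul_left (anti : ∀ f g : P, br f g = - br g f)
    (leibniz : ∀ f g h : P, br f (g * h) = br f g * h + g * br f h)
    (a b g : P) : br (a * b) g = br a (b * g) + br b (a * g) := by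
  linear_combination anti (a * b) g - leibniz g a b - leibniz a b g - leibniz b a g
    - g * anti a b - b * anti a g - a * anti b g

end BasicBracket

/-- A subspace of codimension one is maximal. -/
lemma cod1 {V : Type*} [AddCommGroup V] [Module ℝ V] {D W : Submodule ℝ V}
    (h1 : Module.finrank ℝ (V ⧸ D) = 1) (hDW : D ≤ W) (hW : W ≠ ⊤) : W = D := by
  by_contra hne
  have hex : ∃ w, w ∈ W ∧ w ∉ D := by
    by_contra hc
    push_neg at hc
    exact hne (le_antisymm (fun x hx => hc x hx) hDW)
  obtain ⟨w, hwW, hwD⟩ := hex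
  haveI : FiniteDimensional ℝ (V ⧸ D) := .of_finrank_pos (by rw [h1]; norm_num)
  have hw0 : D.mkQ w ≠ 0 := by
    simpa [Submodule.mkQ_apply, Submodule.Quotient.mk_eq_zero] using hwD
  have hspan : (ℝ ∙ D.mkQ w) = ⊤ :=
    Submodule.eq_top_of_finrank_eq (by rw [finrank_span_singleton hw0, h1])
  apply hW
  rw [eq_top_iff]
  intro x _
  have hx : D.mkQ x ∈ (ℝ ∙ D.mkQ w) := by rw [hspan]; trivial
  obtain ⟨c, hc⟩ := Submodule.mem_span_singleton.mp hx
  have h2 : D.mkQ (x - c • w) = 0 := by rw [map_sub, map_smul, hc, sub_self]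
  have hxd : x - c • w ∈ D := by
    rwa [Submodule.mkQ_apply, Submodule.Quotient.mk_eq_zero] at h2
  have hxx : x = (x - c • w) + c • w := by abel
  rw [hxx]
  exact W.add_mem (hDW hxd) (W.smul_mem c hwW)

end Stmt5Aux

open Stmt5Aux Polynomial Module

set_option maxHeartbeats 1000000 in
set_option synthInstance.maxHeartbeats 200000 in
/-- Let `P` be a unital Poisson algebra over `ℝ` whose derived ideal
`D = span {P,P}` has codimension 1, and suppose `f² ∈ D → f = 0`. Then every
finite-codimensional Lie ideal of `P` contains `D`, and hence has codimension at most 1. -/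
theorem finite_codim_lie_ideal_contains_derived
    {P : Type*} [CommRing P] [Algebra ℝ P]
    (br : P →ₗ[ℝ] P →ₗ[ℝ] P)
    (anti : ∀ f g : P, br f g = - br g f)
    (jacobi : ∀ f g h : P, br f (br g h) = br (br f g) h + br g (br f h))
    (leibniz : ∀ f g h : P, br f (g * h) = br f g * h + g * br f h)
    (hcodim : Module.finrank ℝ (P ⧸ Submodule.span ℝ {x : P | ∃ f g : P, x = br f g}) = 1)
    (hsq : ∀ f : P, f ^ 2 ∈ Submodule.span ℝ {x : P | ∃ f g : P, x = br f g} → f = 0) :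
    ∀ L : Submodule ℝ P, (∀ f : P, ∀ l ∈ L, br f l ∈ L) →
      FiniteDimensional ℝ (P ⧸ L) →
      Submodule.span ℝ {x : P | ∃ f g : P, x = br f g} ≤ L ∧
      Module.finrank ℝ (P ⧸ L) ≤ 1 := by
  set D : Submodule ℝ P := Submodule.span ℝ {x : P | ∃ f g : P, x = br f g} with hD
  -- `1 ∉ D`
  have one_notin_D : (1 : P) ∉ D := by
    intro h1D
    have h10 : (1 : P) = 0 := hsq 1 (by simpa using h1D)
    have hall : ∀ x : P, x ∈ D := by
      intro x
      have : x = 0 := by calc x = x * 1 := (mul_one x).symm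
                              _ = 0 := by rw [h10, mul_zero]
      rw [this]; exact D.zero_mem
    have hDtop : D = ⊤ := Submodule.eq_top_iff'.mpr hall
    haveI : Subsingleton (P ⧸ D) :=
      Submodule.Quotient.subsingleton_iff.mpr hDtop
    rw [finrank_zero_of_subsingleton] at hcodim
    exact zero_ne_one hcodim
  intro L hL hfin
  -- the main claim: D ≤ L
  have main : D ≤ L := by
    set M : Submodule ℝ P := lam br L with hM
    -- basic facts about M
    have hLM : L ≤ M := by
      intro l hl
      intro g
      rw [anti l g]
      exact L.neg_mem (hL g l hl)
    have h1M : (1 : P) ∈ M := by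
      intro g
      have : br 1 g = 0 := by
        rw [anti 1 g, br_one_right br leibniz g, neg_zero]
      rw [this]; exact L.zero_mem
    have hMlie : ∀ f : P, ∀ a ∈ M, br f a ∈ M := by
      intro f a ha g
      have hj : br (br f a) g = br f (br a g) - br a (br f g) := by
        rw [jacobi f a g]; ring
      rw [hj]
      exact L.sub_mem (hL f _ (ha g)) (ha (br f g))
    have hMmul : ∀ a ∈ M, ∀ b ∈ M, a * b ∈ M := by
      intro a ha b hb g
      rw [br_mul_left br anti leibniz a b g]
      exact L.add_mem (ha (b * g)) (hb (a * g))
    -- finite codimension of M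
    haveI hMfd : FiniteDimensional ℝ (P ⧸ M) := by
      have hcomap : ∀ f : P, L ≤ L.comap (br f) := fun f l hl => hL f l hl
      let ψ : P →ₗ[ℝ] ((P ⧸ L) →ₗ[ℝ] (P ⧸ L)) :=
        { toFun := fun f => Submodule.mapQ L L (br f) (hcomap f)
          map_add' := by
            intro f g
            apply Submodule.linearMap_qext
            ext x
            simp [Submodule.mapQ_apply, map_add]
          map_smul' := by
            intro c f
            apply Submodule.linearMap_qext
            ext x
            simp [Submodule.mapQ_apply, map_smul] }
      have hψ : ∀ (f x : P), ψ f (Submodule.Quotient.mk x) = Submodule.Quotient.mk (br f x) :=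
        fun f x => rfl
      have hker : LinearMap.ker ψ = M := by
        ext f
        constructor
        · intro hf g
          have h1 : ψ f (Submodule.Quotient.mk g) = 0 := by
            rw [LinearMap.mem_ker.mp hf]; rfl
          have h2 : Submodule.Quotient.mk (p := L) (br f g) = 0 := by rwa [hψ] at h1
          exact (Submodule.Quotient.mk_eq_zero L).mp h2
        · intro hf
          rw [LinearMap.mem_ker]
          apply Submodule.linearMap_qext
          ext x
          simp only [LinearMap.comp_apply, Submodule.mkQ_apply, LinearMap.zero_comp,
            LinearMap.zero_apply]
          show Submodule.Quotient.mk (br f x) = 0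
          exact (Submodule.Quotient.mk_eq_zero L).mpr (hf x)
      haveI : FiniteDimensional ℝ (P ⧸ LinearMap.ker ψ) :=
        Module.Finite.equiv (LinearMap.quotKerEquivRange ψ).symm
      rwa [hker] at this
    -- the case M = ⊤ is immediate
    by_cases hMtop : M = ⊤
    · rw [hD, Submodule.span_le]
      rintro x ⟨f, g, rfl⟩
      have hfM : f ∈ M := by rw [hMtop]; trivial
      exact hfM g
    -- otherwise, run the main machinery and derive a contradiction
    · exfalso
      set I : Submodule ℝ P := condSub M with hI
      have hIM : I ≤ M := by
        intro x hx
        have := hx 1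
        rwa [mul_one] at this
      have hImul : ∀ y : P, ∀ x ∈ I, y * x ∈ I := by
        intro y x hx h
        have : y * x * h = x * (y * h) := by ring
        rw [this]
        exact hx (y * h)
      have hIlie : ∀ f : P, ∀ x ∈ I, br f x ∈ I := by
        intro f x hx h
        have hid : br f x * h = br f (x * h) - x * br f h := by
          rw [leibniz f x h]; ring
        rw [hid]
        exact M.sub_mem (hMlie f _ (hx h)) (hx (br f h))
      have h1I : (1 : P) ∉ I := by
        intro h1
        apply hMtop
        rw [eq_top_iff]
        intro x _
        have := h1 x
        rwa [one_mul] at this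
      -- finite codimension of I
      haveI hIfd : FiniteDimensional ℝ (P ⧸ I) := by
        obtain ⟨s, hs⟩ : ∃ s : Finset (P ⧸ M), Submodule.span ℝ (↑s : Set (P ⧸ M)) = ⊤ :=
          Module.finite_def.mp ‹Module.Finite ℝ (P ⧸ M)›
        let t : (P ⧸ M) → P := Function.surjInv (Submodule.mkQ_surjective M)
        have ht : ∀ c, M.mkQ (t c) = c := fun c =>
          Function.surjInv_eq (Submodule.mkQ_surjective M) c
        let χ : P →ₗ[ℝ] (P ⧸ M) × (↥s → (P ⧸ M)) :=
          LinearMap.prod M.mkQ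
            (LinearMap.pi (fun k : ↥s => M.mkQ.comp (LinearMap.mulRight ℝ (t ↑k))))
        have hker : LinearMap.ker χ = I := by
          ext x
          rw [LinearMap.mem_ker]
          constructor
          · intro hx
            have hx1 : M.mkQ x = 0 := congrArg Prod.fst hx
            have hxM : x ∈ M := by
              rwa [Submodule.mkQ_apply, Submodule.Quotient.mk_eq_zero] at hx1
            have hx2 : ∀ k : ↥s, x * t ↑k ∈ M := by
              intro k
              have : (LinearMap.pi (fun k : ↥s => M.mkQ.comp (LinearMap.mulRight ℝ (t ↑k)))) x = 0 :=
                congrArg Prod.snd hx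
              have hk := congrFun this k
              simp only [LinearMap.pi_apply, LinearMap.comp_apply,
                LinearMap.mulRight_apply, Pi.zero_apply] at hk
              rwa [Submodule.mkQ_apply, Submodule.Quotient.mk_eq_zero] at hk
            -- show x ∈ I
            intro h
            have hmem : M.mkQ h ∈ Submodule.span ℝ (↑s : Set (P ⧸ M)) := by
              rw [hs]; trivial
            have key : ∀ (c : P ⧸ M), c ∈ Submodule.span ℝ (↑s : Set (P ⧸ M)) →
                ∀ h', M.mkQ h' = c → x * h' ∈ M := by
              intro c hc
              induction hc using Submodule.span_induction with
              | mem c hcs =>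
                  intro h' hh'
                  have hd : h' - t c ∈ M := by
                    rw [← Submodule.Quotient.mk_eq_zero M, ← Submodule.mkQ_apply,
                      map_sub, hh', ht, sub_self]
                  have hxe : x * h' = x * (h' - t c) + x * t c := by ring
                  rw [hxe]
                  exact M.add_mem (hMmul x hxM _ hd) (hx2 ⟨c, hcs⟩)
              | zero =>
                  intro h' hh'
                  have hd : h' ∈ M := by
                    rwa [Submodule.mkQ_apply, Submodule.Quotient.mk_eq_zero] at hh'
                  exact hMmul x hxM _ hd
              | add c1 c2 hc1 hc2 ih1 ih2 =>
                  intro h' hh'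
                  have hm2 : M.mkQ (h' - t c1) = c2 := by
                    rw [map_sub, hh', ht, add_sub_cancel_left]
                  have hxe : x * h' = x * (h' - t c1) + x * t c1 := by ring
                  rw [hxe]
                  exact M.add_mem (ih2 _ hm2) (ih1 _ (ht c1))
              | smul a c hc ih =>
                  intro h' hh'
                  have hm2 : M.mkQ (h' - a • t c) = 0 := by
                    rw [map_sub, map_smul, hh', ht, sub_self]
                  have hd : h' - a • t c ∈ M := by
                    rwa [Submodule.mkQ_apply, Submodule.Quotient.mk_eq_zero] at hm2
                  have hxe : x * h' = x * (h' - a • t c) + a • (x * t c) := by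
                    rw [mul_sub, mul_smul_comm]; abel
                  rw [hxe]
                  exact M.add_mem (hMmul x hxM _ hd) (M.smul_mem a (ih _ (ht c)))
            exact key (M.mkQ h) hmem h rfl
          · intro hx
            have hxM : x ∈ M := hIM hx
            apply Prod.ext
            · show M.mkQ x = 0
              rw [Submodule.mkQ_apply, Submodule.Quotient.mk_eq_zero]
              exact hxM
            · funext k
              show M.mkQ (x * t ↑k) = 0
              rw [Submodule.mkQ_apply, Submodule.Quotient.mk_eq_zero]
              exact hx (t ↑k)
        haveI : FiniteDimensional ℝ (P ⧸ LinearMap.ker χ) :=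
          LinearEquiv.finiteDimensional (LinearMap.quotKerEquivRange χ).symm
        rwa [hker] at this
      -- the trace functional
      have hcomapI : ∀ x : P, I ≤ I.comap (LinearMap.mulLeft ℝ x) := by
        intro x i hi
        show x * i ∈ I
        exact hImul x i hi
      let Mop : P →ₗ[ℝ] ((P ⧸ I) →ₗ[ℝ] (P ⧸ I)) :=
        { toFun := fun x => Submodule.mapQ I I (LinearMap.mulLeft ℝ x) (hcomapI x)
          map_add' := by
            intro x y
            apply Submodule.linearMap_qext
            ext h
            simp [Submodule.mapQ_apply, add_mul]
          map_smul' := by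
            intro c x
            apply Submodule.linearMap_qext
            ext h
            simp [Submodule.mapQ_apply, smul_mul_assoc] }
      let τ : P →ₗ[ℝ] ℝ := (LinearMap.trace ℝ (P ⧸ I)).comp Mop
      have hτI : ∀ x ∈ I, τ x = 0 := by
        intro x hx
        have hM0 : Mop x = 0 := by
          apply Submodule.linearMap_qext
          ext h
          simp only [LinearMap.comp_apply, Submodule.mkQ_apply, LinearMap.zero_comp,
            LinearMap.zero_apply]
          show Submodule.Quotient.mk (LinearMap.mulLeft ℝ x h) = 0
          rw [Submodule.Quotient.mk_eq_zero]
          show x * h ∈ I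
          have : x * h = h * x := mul_comm x h
          rw [this]
          exact hImul h x hx
        show (LinearMap.trace ℝ (P ⧸ I)) (Mop x) = 0
        rw [hM0, map_zero]
      have hτbr : ∀ f g : P, τ (br f g) = 0 := by
        intro f g
        have hcomapbr : I ≤ I.comap (br f) := fun i hi => hIlie f i hi
        let δ : (P ⧸ I) →ₗ[ℝ] (P ⧸ I) := Submodule.mapQ I I (br f) hcomapbr
        have hop : Mop (br f g) = δ * Mop g - Mop g * δ := by
          apply Submodule.linearMap_qext
          ext h
          simp only [LinearMap.comp_apply, Submodule.mkQ_apply, LinearMap.sub_apply,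
            Module.End.mul_apply]
          show Submodule.Quotient.mk (LinearMap.mulLeft ℝ (br f g) h) =
            δ ((Mop g) (Submodule.Quotient.mk h)) - (Mop g) (δ (Submodule.Quotient.mk h))
          have e1 : (Mop g) (Submodule.Quotient.mk h) =
              Submodule.Quotient.mk (g * h) := rfl
          have e2 : δ (Submodule.Quotient.mk h) =
              Submodule.Quotient.mk (br f h) := rfl
          rw [e1, e2]
          have e3 : δ (Submodule.Quotient.mk (p := I) (g * h)) =
              Submodule.Quotient.mk (br f (g * h)) := rfl
          have e4 : (Mop g) (Submodule.Quotient.mk (p := I) (br f h)) =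
              Submodule.Quotient.mk (g * br f h) := rfl
          rw [e3, e4, ← Submodule.Quotient.mk_sub]
          show Submodule.Quotient.mk (br f g * h) = _
          congr 1
          rw [leibniz f g h]; ring
        show (LinearMap.trace ℝ (P ⧸ I)) (Mop (br f g)) = 0
        rw [hop, map_sub, LinearMap.trace_mul_comm, sub_self]
      have hτ1 : τ 1 = (Module.finrank ℝ (P ⧸ I) : ℝ) := by
        have hM1 : Mop 1 = LinearMap.id := by
          apply Submodule.linearMap_qext
          ext h
          simp only [LinearMap.comp_apply, Submodule.mkQ_apply, LinearMap.id_comp]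
          show Submodule.Quotient.mk (LinearMap.mulLeft ℝ (1 : P) h) = Submodule.Quotient.mk h
          rw [LinearMap.mulLeft_apply, one_mul]
        show (LinearMap.trace ℝ (P ⧸ I)) (Mop 1) = _
        rw [hM1, LinearMap.trace_id]
      haveI : Nontrivial (P ⧸ I) := by
        rw [← not_subsingleton_iff_nontrivial, Submodule.Quotient.subsingleton_iff]
        intro hItop
        exact h1I (hItop ▸ Submodule.mem_top)
      have hτ1ne : τ 1 ≠ 0 := by
        rw [hτ1]
        exact Nat.cast_ne_zero.mpr Module.finrank_pos.ne'
      -- I ≤ D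
      have hID : I ≤ D := by
        have hWker : D ⊔ I ≤ LinearMap.ker τ := by
          apply sup_le
          · rw [hD, Submodule.span_le]
            rintro x ⟨f, g, rfl⟩
            exact LinearMap.mem_ker.mpr (hτbr f g)
          · intro x hx
            exact LinearMap.mem_ker.mpr (hτI x hx)
        have hWne : D ⊔ I ≠ ⊤ := by
          intro htop
          have : (1 : P) ∈ LinearMap.ker τ := hWker (htop ▸ Submodule.mem_top)
          exact hτ1ne (LinearMap.mem_ker.mp this)
        have := cod1 hcodim le_sup_left hWne
        exact le_sup_right.trans this.le
      -- polynomial argument: every bracket lies in I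
      have hbrI : ∀ f g : P, br f g ∈ I := by
        intro f g
        set u : P := br f g with hu
        -- the ideal of polynomials q with q(f) ∈ I
        let J : Ideal ℝ[X] :=
          { carrier := {q | aeval f q ∈ I}
            add_mem' := by
              intro p q hp hq
              show aeval f (p + q) ∈ I
              rw [map_add]
              exact I.add_mem hp hq
            zero_mem' := by show aeval f (0 : ℝ[X]) ∈ I; rw [map_zero]; exact I.zero_mem
            smul_mem' := by
              intro c q hq
              show aeval f (c • q) ∈ I
              rw [smul_eq_mul, map_mul]
              exact hImul _ _ hq }
        have hmemJ : ∀ q : ℝ[X], q ∈ J ↔ aeval f q ∈ I := fun q => Iff.rfl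
        -- J is nonzero
        have hJne : ∃ p₀ : ℝ[X], p₀ ∈ J ∧ p₀ ≠ 0 := by
          set d : ℕ := Module.finrank ℝ (P ⧸ I) with hd
          have hnli : ¬ LinearIndependent ℝ (fun i : Fin (d + 1) => I.mkQ (f ^ (i : ℕ))) := by
            intro hli
            have := hli.fintype_card_le_finrank
            rw [Fintype.card_fin] at this
            omega
          rw [Fintype.not_linearIndependent_iff] at hnli
          obtain ⟨c, hsum, i0, hi0⟩ := hnli
          refine ⟨∑ j : Fin (d + 1), C (c j) * X ^ (j : ℕ), ?_, ?_⟩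
          · show aeval f (∑ j : Fin (d + 1), C (c j) * X ^ (j : ℕ)) ∈ I
            have heval : aeval f (∑ j : Fin (d + 1), C (c j) * X ^ (j : ℕ)) =
                ∑ j : Fin (d + 1), c j • f ^ (j : ℕ) := by
              rw [map_sum]
              congr 1
              funext j
              rw [map_mul, aeval_C, map_pow, aeval_X, ← Algebra.smul_def]
            rw [heval, ← Submodule.Quotient.mk_eq_zero I]
            have : Submodule.Quotient.mk (p := I) (∑ j : Fin (d + 1), c j • f ^ (j : ℕ)) =
                ∑ j : Fin (d + 1), c j • I.mkQ (f ^ (j : ℕ)) := by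
              rw [← Submodule.mkQ_apply, map_sum]
              exact Finset.sum_congr rfl (fun j _ => map_smul _ _ _)
            rw [this, hsum]
          · intro h0
            have hco : (∑ j : Fin (d + 1), C (c j) * X ^ (j : ℕ)).coeff (i0 : ℕ) = c i0 := by
              rw [finset_sum_coeff]
              rw [Finset.sum_eq_single i0]
              · rw [C_mul_X_pow_eq_monomial, coeff_monomial, if_pos rfl]
              · intro j _ hji
                rw [C_mul_X_pow_eq_monomial, coeff_monomial, if_neg]
                intro hval
                exact hji (Fin.val_injective hval)
              · intro h
                exact absurd (Finset.mem_univ i0) h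
            rw [h0, coeff_zero] at hco
            exact hi0 hco.symm
        obtain ⟨p₀, hp₀J, hp₀ne⟩ := hJne
        haveI hJprin : J.IsPrincipal := IsPrincipalIdealRing.principal J
        set p : ℝ[X] := Submodule.IsPrincipal.generator J with hp
        have hpJ : p ∈ J := Submodule.IsPrincipal.generator_mem J
        have hpd : ∀ q : ℝ[X], q ∈ J ↔ p ∣ q := fun q =>
          Submodule.IsPrincipal.mem_iff_generator_dvd J
        have hpne : p ≠ 0 := by
          intro h0
          apply hp₀ne
          have := (hpd p₀).mp hp₀J
          rw [h0] at this
          exact zero_dvd_iff.mp this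
        -- p is squarefree
        have hsf : Squarefree p := by
          intro q hq
          obtain ⟨r, hr⟩ := hq
          by_contra hqu
          have hy2 : (aeval f (q * r)) ^ 2 ∈ D := by
            have : (aeval f (q * r)) ^ 2 = aeval f p * aeval f r := by
              rw [← map_pow, ← map_mul]
              congr 1
              rw [hr]; ring
            rw [this]
            apply hID
            have : aeval f p * aeval f r = aeval f r * aeval f p := mul_comm _ _
            rw [this]
            exact hImul _ _ hpJ
          have hy0 : aeval f (q * r) = 0 := hsq _ hy2
          have hqrJ : q * r ∈ J := by
            show aeval f (q * r) ∈ I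
            rw [hy0]; exact I.zero_mem
          obtain ⟨s', hs'⟩ := (hpd (q * r)).mp hqrJ
          by_cases hqr0 : q * r = 0
          · apply hpne
            rw [hr, show q * q * r = q * (q * r) by ring, hqr0, mul_zero]
          · apply hqu
            apply IsUnit.of_mul_eq_one s'
            have hcan : q * r * 1 = q * r * (q * s') := by
              linear_combination hs' + s' * hr
            exact (mul_left_cancel₀ hqr0 hcan).symm
        -- p is separable, hence coprime to its derivative
        have hsep : p.Separable := PerfectField.separable_iff_squarefree.mpr hsf
        obtain ⟨a, b, hab⟩ := hsep
        -- the two memberships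
        have h1 : aeval f p * u ∈ I := by
          rw [mul_comm]
          exact hImul _ _ hpJ
        have h2 : aeval f (derivative p) * u ∈ I := by
          rw [← br_aeval_left br anti leibniz f g p]
          rw [anti (aeval f p) g]
          exact I.neg_mem (hIlie g _ hpJ)
        have e : aeval f a * aeval f p + aeval f b * aeval f (derivative p) = 1 := by
          have := congrArg (aeval f) hab
          simpa [map_add, map_mul, map_one] using this
        have hue : u = aeval f a * (aeval f p * u) + aeval f b * (aeval f (derivative p) * u) := by
          linear_combination (-u) * e
        rw [hue]
        exact I.add_mem (hImul _ _ h1) (hImul _ _ h2)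
      -- conclude: D ≤ M, contradiction with cod1
      have hDM : D ≤ M := by
        rw [hD, Submodule.span_le]
        rintro x ⟨f, g, rfl⟩
        exact hIM (hbrI f g)
      have hMeq : M = D := cod1 hcodim hDM hMtop
      exact one_notin_D (hMeq ▸ h1M)
  refine ⟨main, ?_⟩
  -- deduce the codimension bound
  haveI : FiniteDimensional ℝ (P ⧸ D) := .of_finrank_pos (by rw [hcodim]; norm_num)
  let φ : (P ⧸ D) →ₗ[ℝ] (P ⧸ L) := Submodule.mapQ D L LinearMap.id main
  have hsurj : Function.Surjective φ := by
    intro y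
    obtain ⟨x, rfl⟩ := Submodule.mkQ_surjective L y
    exact ⟨Submodule.Quotient.mk x, rfl⟩
  have hrange : LinearMap.range φ = ⊤ := LinearMap.range_eq_top.mpr hsurj
  calc Module.finrank ℝ (P ⧸ L)
      = Module.finrank ℝ (⊤ : Submodule ℝ (P ⧸ L)) := (finrank_top ℝ _).symm
    _ = Module.finrank ℝ (LinearMap.range φ) := by rw [hrange]
    _ ≤ Module.finrank ℝ (P ⧸ D) := LinearMap.finrank_range_le φ
    _ = 1 := hcodim
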